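/- For n ≥ 1, if b is a border of M_{2n+2}, then the word obtained from φ(b) by deleting its first letter (which is 0) is a border of M_{2n+3}. -/

import Mathlib

/-- The Fibonacci morphism: `false` (=0) ↦ 01, `true` (=1) ↦ 0. -/
def phi (w : List Bool) : List Bool :=
  w.flatMap (fun b => if b then [false] else [false, true])

/-- The Fibonacci words: f₁ = 1, f₂ = 0, f_{n+2} = f_{n+1} f_n. -/
def fw : ℕ → List Bool
  | 0 => []
  | 1 => [true]
  | 2 => [false]
  | (n+3) => fw (n+2) ++ fw (n+1)

/-- Palindromic prefix: f_n with its last two letters removed. -/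
def pw (n : ℕ) : List Bool := (fw n).dropLast.dropLast

/-- Minimal forbidden words of the Fibonacci word:
`M_{2n+1} = 1 p_{2n+1} 1`, `M_{2n+2} = 0 p_{2n+2} 0`. -/
def Mw (n : ℕ) : List Bool :=
  if n % 2 = 0 then false :: (pw n ++ [false]) else true :: (pw n ++ [true])

/-- Correlation bit: `corr u v k` holds iff `C_{u,v}[k] = 1`. -/
def corr {α : Type*} (u v : List α) (k : ℕ) : Prop :=
  ∀ i j : ℕ, i < u.length → j < v.length → i = j + k → u[i]? = v[j]?

/-- A border of a word is both a prefix and a suffix. -/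
def IsBorder {α : Type*} (b w : List α) : Prop := b <+: w ∧ b <:+ w

/-- The set of nonempty borders of `M_n`. -/
def Bset (n : ℕ) : Set (List Bool) := {b | b ≠ [] ∧ IsBorder b (Mw n)}

open scoped Classical in
/-- The correlation polynomial `C_{u,v}(z) = ∑_{k<|u|} C_{u,v}[k] z^{|u|-1-k}`. -/
noncomputable def corrPoly (u v : List Bool) : Polynomial ℤ :=
  ∑ k ∈ Finset.range u.length,
    if corr u v k then Polynomial.X ^ (u.length - 1 - k) else 0

open scoped Classical in
/-- The nonempty borders of `w`, as a finset. -/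
noncomputable def borderFinset (w : List Bool) : Finset (List Bool) :=
  ((Finset.range (w.length + 1)).image (fun k => w.take k)).filter
    (fun b => b ≠ [] ∧ b <:+ w)

lemma phi_append (u v : List Bool) : phi (u ++ v) = phi u ++ phi v := by
  simp [phi]

lemma phi_fw : ∀ n, phi (fw (n+1)) = fw (n+2)
  | 0 => rfl
  | 1 => rfl
  | (n+2) => by
    show phi (fw (n+2) ++ fw (n+1)) = fw (n+3) ++ fw (n+2)
    rw [phi_append, phi_fw (n+1), phi_fw n]

lemma fw_tail2 : ∀ n, (∃ u, fw (2*n+3) = u ++ [false, true]) ∧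
    (∃ u, fw (2*n+4) = u ++ [true, false])
  | 0 => ⟨⟨[], rfl⟩, ⟨[false], rfl⟩⟩
  | (n+1) => by
    obtain ⟨⟨u, hu⟩, ⟨v, hv⟩⟩ := fw_tail2 n
    constructor
    · exact ⟨fw (2*n+4) ++ u, by
        show fw (2*n+4) ++ fw (2*n+3) = _
        rw [hu, List.append_assoc]⟩
    · exact ⟨fw (2*(n+1)+3) ++ v, by
        show fw (2*(n+1)+3) ++ fw (2*n+4) = _
        rw [hv, List.append_assoc]⟩

lemma pw_of_tail2 {k : ℕ} {u : List Bool} {a c : Bool} (h : fw k = u ++ [a, c]) :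
    pw k = u ∧ fw k = pw k ++ [a, c] := by
  have : pw k = u := by
    rw [pw, h, show u ++ [a, c] = (u ++ [a]) ++ [c] by simp]
    rw [List.dropLast_concat, List.dropLast_concat]
  exact ⟨this, by rw [this, ← h]⟩

lemma key (n : ℕ) (hn : 1 ≤ n) : phi (Mw (2*n+2)) = false :: Mw (2*n+3) := by
  obtain ⟨m, rfl⟩ := Nat.exists_eq_add_of_le hn
  obtain ⟨⟨u, hu⟩, ⟨v, hv⟩⟩ := fw_tail2 m
  obtain ⟨hpu, hfu⟩ := pw_of_tail2 hu
  obtain ⟨hpv, hfv⟩ := pw_of_tail2 hv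
  have he : 2*(1+m)+2 = 2*m+4 := by ring
  have ho : 2*(1+m)+3 = 2*(m+1)+3 := by ring
  -- φ(fw (2m+4)) = fw (2m+5) = fw (2(m+1)+3)
  have hphi : phi (fw (2*m+4)) = fw (2*(m+1)+3) := phi_fw (2*m+3)
  -- derive pw (2(m+1)+3) = phi (pw (2m+4)) ++ [false]
  obtain ⟨⟨w, hw⟩, -⟩ := fw_tail2 (m+1)
  obtain ⟨hpw', hfw'⟩ := pw_of_tail2 hw
  have hpp : pw (2*(m+1)+3) = phi (pw (2*m+4)) ++ [false] := by
    have h1 : phi (pw (2*m+4)) ++ [false] ++ [false, true]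
        = pw (2*(m+1)+3) ++ [false, true] := by
      have := hphi
      rw [hfv, phi_append, hfw'] at this
      rw [← this]
      simp [phi]
    exact (List.append_cancel_right h1).symm
  have h2 : (2*m+4) % 2 = 0 := by omega
  have h3 : (2*(m+1)+3) % 2 = 1 := by omega
  rw [he, ho, Mw, Mw, if_pos h2, if_neg (by omega)]
  show phi (false :: (pw (2*m+4) ++ [false])) = _
  rw [show (false : Bool) :: (pw (2*m+4) ++ [false])
      = [false] ++ pw (2*m+4) ++ [false] by simp, phi_append, phi_append, hpp]
  simp [phi]

lemma tail_prefix_tail {u v : List Bool} (h : u <+: v) (hu : u ≠ []) :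
    u.tail <+: v.tail := by
  obtain ⟨t, rfl⟩ := h
  cases u with
  | nil => exact absurd rfl hu
  | cons a u' => exact ⟨t, by simp⟩

theorem stmt11 (n : ℕ) (hn : 1 ≤ n) (b : List Bool) (hb : IsBorder b (Mw (2*n+2))) :
    IsBorder ((phi b).tail) (Mw (2*n+3)) := by
  rcases eq_or_ne b [] with rfl | hne
  · exact ⟨List.nil_prefix, List.nil_suffix⟩
  obtain ⟨hpre, hsuf⟩ := hb
  have hk := key n hn
  -- phi b is a prefix of phi (Mw (2n+2))
  have hp : phi b <+: phi (Mw (2*n+2)) := by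
    obtain ⟨t, ht⟩ := hpre
    exact ⟨phi t, by rw [← phi_append, ht]⟩
  have hs : phi b <:+ phi (Mw (2*n+2)) := by
    obtain ⟨t, ht⟩ := hsuf
    exact ⟨phi t, by rw [← phi_append, ht]⟩
  rw [hk] at hp hs
  have hphine : phi b ≠ [] := by
    cases b with
    | nil => exact absurd rfl hne
    | cons a b' => cases a <;> simp [phi]
  constructor
  · exact tail_prefix_tail hp hphine
  · rcases List.suffix_cons_iff.mp hs with h | h
    · rw [h]; exact List.suffix_refl _
    · exact (List.tail_suffix _).trans h
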